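/- Let S be the convex hull of points A_1, ..., A_m in ℝ^{d+1} and let K ⊆ ℝ^{d+1} be a closed convex cone containing the origin. Then the closure of the convex hull of S ∪ (A_1 + K) equals the Minkowski sum S + K. -/

import Mathlib

open scoped Pointwise

theorem closure_convexHull_union_cone
    {d m : ℕ} [NeZero m] (A : Fin m → EuclideanSpace ℝ (Fin (d + 1)))
    (K : Set (EuclideanSpace ℝ (Fin (d + 1))))
    (hKclosed : IsClosed K) (hKconv : Convex ℝ K) (hK0 : (0 : EuclideanSpace ℝ (Fin (d + 1))) ∈ K)
    (hKcone : ∀ x ∈ K, ∀ lam : ℝ, 0 < lam → lam • x ∈ K)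
    (S : Set (EuclideanSpace ℝ (Fin (d + 1))))
    (hS : S = convexHull ℝ (Set.range A)) :
    closure (convexHull ℝ (S ∪ ({A 0} + K))) = S + K := by
  have hScomp : IsCompact S := by
    rw [hS]; exact (Set.finite_range A).isCompact_convexHull (𝕜 := ℝ)
  have hSconv : Convex ℝ S := hS ▸ convex_convexHull ℝ _
  have hA0S : A 0 ∈ S := hS ▸ subset_convexHull ℝ _ ⟨0, rfl⟩
  have hclosed : IsClosed (S + K) := hKclosed.add_left_of_isCompact hScomp
  apply subset_antisymm
  · apply closure_minimal _ hclosed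
    apply convexHull_min _ (hSconv.add hKconv)
    rintro x (hx | hx)
    · exact ⟨x, hx, 0, hK0, add_zero x⟩
    · obtain ⟨a, ha, k, hk, rfl⟩ := hx
      rw [Set.mem_singleton_iff] at ha; subst ha
      exact ⟨A 0, hA0S, k, hk, rfl⟩
  · rintro x ⟨s, hs, k, hk, rfl⟩
    rw [mem_closure_iff_seq_limit]
    set t : ℕ → ℝ := fun n => (n + 1 : ℝ)⁻¹ with ht
    refine ⟨fun n => (1 - t n) • s + t n • A 0 + k, fun n => ?_, ?_⟩
    · have htpos : 0 < t n := by positivity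
      have htle : t n ≤ 1 := by
        rw [ht]
        simp only []
        rw [inv_le_one_iff₀]
        right; linarith [Nat.cast_nonneg (α := ℝ) n]
      have hy : A 0 + (t n)⁻¹ • k ∈ ({A 0} + K) :=
        ⟨A 0, rfl, (t n)⁻¹ • k, hKcone k hk _ (by positivity), rfl⟩
      have hmem := (convex_convexHull ℝ (S ∪ ({A 0} + K)))
        (subset_convexHull ℝ _ (Or.inl hs))
        (subset_convexHull ℝ _ (Or.inr hy))
        (by linarith : (0:ℝ) ≤ 1 - t n) htpos.le (by ring)
      convert hmem using 1
      rw [smul_add, smul_smul, mul_inv_cancel₀ htpos.ne', one_smul]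
      abel
    · have htlim : Filter.Tendsto t Filter.atTop (nhds 0) := by
        rw [ht]
        simpa [one_div] using tendsto_one_div_add_atTop_nhds_zero_nat (𝕜 := ℝ)
      have : Filter.Tendsto (fun n => (1 - t n) • s + t n • A 0 + k)
          Filter.atTop (nhds ((1 - (0:ℝ)) • s + (0:ℝ) • A 0 + k)) := by
        exact (((tendsto_const_nhds.sub htlim).smul tendsto_const_nhds).add
          (htlim.smul tendsto_const_nhds)).add tendsto_const_nhds
      simpa using this
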